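/- Assume hypothesis H(a). Then there exists a constant c₂ ∈ (0,1) such that for every ξ ∈ ℝ^N one has |a(ξ)| ≤ (1/c₂)(1 + |ξ|^{p−1}) and c₂|ξ|^p ≤ ⟨a(ξ), ξ⟩ ≤ (1/c₂)(1 + |ξ|^p). -/

import Mathlib

open scoped RealInnerProductSpace

/-- Comparison: if `f x₀ ≤ F x₀` and `f' ≤ F'` on `(x₀, t)`, then `f t ≤ F t`. -/
lemma aux_le_of_deriv_le {f F f' F' : ℝ → ℝ} {x0 t : ℝ} (hx : x0 ≤ t)
    (hfc : ContinuousOn f (Set.Icc x0 t)) (hFc : ContinuousOn F (Set.Icc x0 t))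
    (hfd : ∀ s ∈ Set.Ioo x0 t, HasDerivAt f (f' s) s)
    (hFd : ∀ s ∈ Set.Ioo x0 t, HasDerivAt F (F' s) s)
    (hle : ∀ s ∈ Set.Ioo x0 t, f' s ≤ F' s)
    (h0 : f x0 ≤ F x0) : f t ≤ F t := by
  have hmono : MonotoneOn (fun s => F s - f s) (Set.Icc x0 t) := by
    apply monotoneOn_of_deriv_nonneg (convex_Icc x0 t) (hFc.sub hfc)
    · intro s hs
      rw [interior_Icc] at hs
      exact (((hFd s hs).sub (hfd s hs)).differentiableAt).differentiableWithinAt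
    · intro s hs
      rw [interior_Icc] at hs
      rw [((hFd s hs).sub (hfd s hs)).deriv]
      linarith [hle s hs]
  have := hmono (Set.left_mem_Icc.2 hx) (Set.right_mem_Icc.2 hx) hx
  simp only at this
  linarith

set_option maxHeartbeats 1000000 in
/-- Under hypothesis H(a), there exists `c₂ ∈ (0,1)` such that
`|a(ξ)| ≤ (1/c₂)(1 + |ξ|^(p-1))` and `c₂|ξ|^p ≤ ⟨a(ξ), ξ⟩ ≤ (1/c₂)(1 + |ξ|^p)`
for all `ξ ∈ ℝ^N`. -/
theorem growth_estimates_of_HypA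
    {N : ℕ} (hN : 1 ≤ N) {p : ℝ} (hp : 1 < p)
    (a : EuclideanSpace ℝ (Fin N) → EuclideanSpace ℝ (Fin N))
    (a₀ : ℝ → ℝ) (ω : ℝ → ℝ)
    (Da : EuclideanSpace ℝ (Fin N) →
      (EuclideanSpace ℝ (Fin N) →L[ℝ] EuclideanSpace ℝ (Fin N)))
    (C₁ C₂ C₃ C₄ C₅ : ℝ)
    (hC₁ : 0 < C₁) (hC₂ : 0 < C₂) (hC₃ : 0 < C₃) (hC₄ : 0 < C₄) (hC₅ : 0 < C₅)
    -- ω is C¹ on (0,∞) with C₁ ≤ tω'(t)/ω(t) ≤ C₂ and C₃ t^(p-1) ≤ ω(t) ≤ C₄(1+t^(p-1))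
    (hωC1 : ContDiffOn ℝ 1 ω (Set.Ioi (0:ℝ)))
    (hω₁ : ∀ t : ℝ, 0 < t → C₁ ≤ t * deriv ω t / ω t ∧ t * deriv ω t / ω t ≤ C₂)
    (hω₂ : ∀ t : ℝ, 0 < t → C₃ * t ^ (p - 1) ≤ ω t ∧ ω t ≤ C₄ * (1 + t ^ (p - 1)))
    -- (a₁): a is continuous, radial, generated by a₀
    (hacont : Continuous a)
    (ha0 : a 0 = 0)
    (harad : ∀ ξ : EuclideanSpace ℝ (Fin N), ξ ≠ 0 → a ξ = a₀ ‖ξ‖ • ξ)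
    (ha₀pos : ∀ t : ℝ, 0 < t → 0 < a₀ t)
    (ha₀C1 : ContDiffOn ℝ 1 a₀ (Set.Ioi (0:ℝ)))
    (hmono : StrictMonoOn (fun t : ℝ => t * a₀ t) (Set.Ioi (0:ℝ)))
    (hlim0 : Filter.Tendsto (fun t : ℝ => t * a₀ t)
      (nhdsWithin 0 (Set.Ioi 0)) (nhds 0))
    (hlim1 : ∃ L : ℝ, -1 < L ∧ Filter.Tendsto (fun t : ℝ => t * deriv a₀ t / a₀ t)
      (nhdsWithin 0 (Set.Ioi 0)) (nhds L))
    -- (a₂): a is differentiable away from the origin with the stated bound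
    (hDiff : ∀ ξ : EuclideanSpace ℝ (Fin N), ξ ≠ 0 → HasFDerivAt a (Da ξ) ξ)
    (hDa₂ : ∀ ξ : EuclideanSpace ℝ (Fin N), ξ ≠ 0 → ‖Da ξ‖ ≤ C₅ * ω ‖ξ‖ / ‖ξ‖)
    -- (a₃): ellipticity
    (hDa₃ : ∀ ξ : EuclideanSpace ℝ (Fin N), ξ ≠ 0 →
      ∀ y : EuclideanSpace ℝ (Fin N), (ω ‖ξ‖ / ‖ξ‖) * ‖y‖ ^ 2 ≤ ⟪Da ξ y, y⟫) :
    ∃ c₂ : ℝ, c₂ ∈ Set.Ioo (0:ℝ) 1 ∧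
      ∀ ξ : EuclideanSpace ℝ (Fin N),
        ‖a ξ‖ ≤ (1 / c₂) * (1 + ‖ξ‖ ^ (p - 1)) ∧
        c₂ * ‖ξ‖ ^ p ≤ ⟪a ξ, ξ⟫ ∧
        ⟪a ξ, ξ⟫ ≤ (1 / c₂) * (1 + ‖ξ‖ ^ p) := by
  
  have hp1 : (0:ℝ) < p - 1 := by linarith
  -- the unit vector
  set e : EuclideanSpace ℝ (Fin N) := EuclideanSpace.single ⟨0, hN⟩ (1:ℝ) with hedef
  have he1 : ‖e‖ = 1 := by simp [hedef]
  have hene : e ≠ 0 := by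
    intro h
    rw [h, norm_zero] at he1; norm_num at he1
  -- the scalar function g
  set g : ℝ → ℝ := fun t => ⟪a (t • e), e⟫ with hgdef
  have hte : ∀ t : ℝ, 0 < t → ‖t • e‖ = t := by
    intro t ht
    rw [norm_smul, he1, mul_one, Real.norm_eq_abs, abs_of_pos ht]
  have htne : ∀ t : ℝ, 0 < t → t • e ≠ 0 := by
    intro t ht
    simp [smul_eq_zero, ht.ne', hene]
  have hgval : ∀ t : ℝ, 0 < t → g t = t * a₀ t := by
    intro t ht
    have hr := harad (t • e) (htne t ht)
    rw [hgdef]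
    simp only [hr, hte t ht, real_inner_smul_left]
    rw [real_inner_self_eq_norm_sq, he1]
    ring
  have hg0 : g 0 = 0 := by simp [hgdef, ha0]
  have hgc : Continuous g := by
    exact Continuous.inner (hacont.comp (continuous_id.smul continuous_const)) continuous_const
  -- derivative of g
  have hgd : ∀ t : ℝ, 0 < t → HasDerivAt g (⟪Da (t • e) e, e⟫) t := by
    intro t ht
    have h1 : HasDerivAt (fun s : ℝ => s • e) ((1:ℝ) • e) t :=
      (hasDerivAt_id t).smul_const e
    rw [one_smul] at h1
    have h2 : HasDerivAt (fun s : ℝ => a (s • e)) (Da (t • e) e) t :=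
      (hDiff (t • e) (htne t ht)).comp_hasDerivAt t h1
    have h3 := h2.inner ℝ (hasDerivAt_const t e)
    rw [inner_zero_right, zero_add] at h3
    exact h3
  -- bounds on g'
  have hgd_low : ∀ t : ℝ, 0 < t → ω t / t ≤ ⟪Da (t • e) e, e⟫ := by
    intro t ht
    have := hDa₃ (t • e) (htne t ht) e
    rwa [hte t ht, he1, one_pow, mul_one] at this
  have hgd_up : ∀ t : ℝ, 0 < t → ⟪Da (t • e) e, e⟫ ≤ C₅ * ω t / t := by
    intro t ht
    calc ⟪Da (t • e) e, e⟫ ≤ ‖Da (t • e) e‖ * ‖e‖ := real_inner_le_norm _ _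
      _ ≤ ‖Da (t • e)‖ * ‖e‖ * ‖e‖ :=
        mul_le_mul_of_nonneg_right ((Da (t • e)).le_opNorm e) (norm_nonneg e)
      _ = ‖Da (t • e)‖ := by rw [he1]; ring
      _ ≤ C₅ * ω ‖t • e‖ / ‖t • e‖ := hDa₂ (t • e) (htne t ht)
      _ = C₅ * ω t / t := by rw [hte t ht]
  -- ω positivity-ish lower bound
  have hωlow : ∀ t : ℝ, 0 < t → C₃ * t ^ (p - 1) ≤ ω t := fun t ht => (hω₂ t ht).1
  -- Lower bound for g
  have hL : ∀ t : ℝ, 0 < t → C₃ / (p - 1) * t ^ (p - 1) ≤ g t := by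
    intro t ht
    have := aux_le_of_deriv_le (f := fun s => C₃ / (p - 1) * s ^ (p - 1)) (F := g)
      (f' := fun s => C₃ * s ^ (p - 2)) (F' := fun s => ⟪Da (s • e) e, e⟫)
      (x0 := 0) (t := t) ht.le
      ?_ hgc.continuousOn ?_ (fun s hs => hgd s hs.1) ?_ ?_
    · exact this
    · apply ContinuousOn.mul continuousOn_const
      intro s hs
      exact (Real.continuousAt_rpow_const s (p - 1) (Or.inr hp1.le)).continuousWithinAt
    · intro s hs
      have hd : HasDerivAt (fun x : ℝ => x ^ (p - 1)) ((p - 1) * s ^ (p - 1 - 1)) s :=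
        Real.hasDerivAt_rpow_const (Or.inl hs.1.ne')
      have := hd.const_mul (C₃ / (p - 1))
      refine this.congr_deriv ?_
      have : p - 1 - 1 = p - 2 := by ring
      rw [this]
      field_simp
    · intro s hs
      have hs0 := hs.1
      have h1 : C₃ * s ^ (p - 2) ≤ ω s / s := by
        rw [le_div_iff₀ hs0]
        have h2 : C₃ * s ^ (p - 2) * s = C₃ * s ^ (p - 1) := by
          rw [show p - 1 = (p - 2) + 1 by ring, Real.rpow_add_one hs0.ne']
          ring
        rw [h2]
        exact hωlow s hs0
      exact h1.trans (hgd_low s hs0)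
    · simp [hg0, Real.zero_rpow hp1.ne']
  -- monotonicity of g on (0,∞)
  have hgmono : ∀ s t : ℝ, 0 < s → s ≤ t → g s ≤ g t := by
    intro s t hs hst
    rcases eq_or_lt_of_le hst with rfl | h
    · exact le_rfl
    · rw [hgval s hs, hgval t (lt_trans hs h)]
      exact (hmono hs (lt_trans hs h) h).le
  -- Upper bound for t ≥ 1
  set M : ℝ := 2 * C₄ * C₅ / (p - 1) with hMdef
  have hMpos : 0 < M := by
    apply div_pos _ hp1
    positivity
  have hU2 : ∀ t : ℝ, 1 ≤ t → g t ≤ g 1 + M * t ^ (p - 1) := by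
    intro t ht
    have key := aux_le_of_deriv_le (f := g)
      (F := fun s => (g 1 - M) + M * s ^ (p - 1))
      (f' := fun s => ⟪Da (s • e) e, e⟫)
      (F' := fun s => 2 * C₄ * C₅ * s ^ (p - 2))
      (x0 := 1) (t := t) ht
      hgc.continuousOn ?_ (fun s hs => hgd s (lt_trans one_pos hs.1)) ?_ ?_ ?_
    · linarith [key]
    · apply ContinuousOn.add continuousOn_const
      apply ContinuousOn.mul continuousOn_const
      intro s hs
      exact (Real.continuousAt_rpow_const s (p - 1) (Or.inr hp1.le)).continuousWithinAt
    · intro s hs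
      have hs0 : 0 < s := lt_trans one_pos hs.1
      have hd : HasDerivAt (fun x : ℝ => x ^ (p - 1)) ((p - 1) * s ^ (p - 1 - 1)) s :=
        Real.hasDerivAt_rpow_const (Or.inl hs0.ne')
      have := (hd.const_mul M).const_add (g 1 - M)
      refine this.congr_deriv ?_
      rw [show p - 1 - 1 = p - 2 by ring, hMdef]
      field_simp
    · intro s hs
      have hs1 : 1 < s := hs.1
      have hs0 : 0 < s := lt_trans one_pos hs1
      have h1 : (1:ℝ) ≤ s ^ (p - 1) := Real.one_le_rpow hs1.le hp1.le
      have hωup : ω s ≤ C₄ * (1 + s ^ (p - 1)) := (hω₂ s hs0).2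
      have step : C₅ * ω s / s ≤ 2 * C₄ * C₅ * s ^ (p - 2) := by
        rw [div_le_iff₀ hs0]
        have h2 : 2 * C₄ * C₅ * s ^ (p - 2) * s = 2 * C₄ * C₅ * s ^ (p - 1) := by
          rw [show p - 1 = (p - 2) + 1 by ring, Real.rpow_add_one hs0.ne']
          ring
        rw [h2]
        nlinarith [mul_le_mul_of_nonneg_left hωup hC₅.le,
          mul_le_mul_of_nonneg_left h1 (show (0:ℝ) ≤ C₄ * C₅ by positivity)]
      exact (hgd_up s hs0).trans step
    · simp only [Real.one_rpow]
      linarith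
  -- the global constant K
  have hg1pos : 0 < g 1 := by
    rw [hgval 1 one_pos]
    simpa using ha₀pos 1 one_pos
  set K : ℝ := g 1 + M + 1 with hKdef
  have hKpos : 0 < K := by positivity
  have hUB : ∀ t : ℝ, 0 ≤ t → g t ≤ K * (1 + t ^ (p - 1)) := by
    intro t ht
    have htp : 0 ≤ t ^ (p - 1) := Real.rpow_nonneg ht _
    rcases le_or_gt t 1 with h1 | h1
    · have hgt1 : g t ≤ g 1 := by
        rcases eq_or_lt_of_le ht with h0 | h0
        · rw [← h0, hg0]; exact hg1pos.le
        · exact hgmono t 1 h0 h1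
      nlinarith [hg1pos, hMpos, htp]
    · have := hU2 t h1.le
      nlinarith [htp, hMpos]
  -- choose the constant
  set c : ℝ := min (C₃ / (p - 1)) (min (1 / (2 * K)) (1 / 2)) with hcdef
  have hc0 : 0 < c := by
    apply lt_min (div_pos hC₃ hp1)
    apply lt_min _ (by norm_num)
    positivity
  have hcC : c ≤ C₃ / (p - 1) := min_le_left _ _
  have hcK : c ≤ 1 / (2 * K) := (min_le_right _ _).trans (min_le_left _ _)
  have hchalf : c ≤ 1 / 2 := (min_le_right _ _).trans (min_le_right _ _)
  have h2K : 2 * K ≤ 1 / c := by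
    rw [le_div_iff₀ hc0]
    calc 2 * K * c ≤ 2 * K * (1 / (2 * K)) := by
          apply mul_le_mul_of_nonneg_left hcK
          positivity
      _ = 1 := by field_simp
  refine ⟨c, ⟨hc0, by linarith⟩, ?_⟩
  intro ξ
  by_cases hξ : ξ = 0
  · subst hξ
    have h2 : ⟪(0 : EuclideanSpace ℝ (Fin N)), (0 : EuclideanSpace ℝ (Fin N))⟫ = 0 :=
      inner_zero_left 0
    simp only [ha0, norm_zero, h2, Real.zero_rpow hp1.ne',
      Real.zero_rpow (show p ≠ 0 by linarith), mul_zero, add_zero, mul_one]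
    refine ⟨by positivity, le_rfl, by positivity⟩
  · have ht : 0 < ‖ξ‖ := norm_pos_iff.2 hξ
    set t : ℝ := ‖ξ‖ with htdef
    have hnorm : ‖a ξ‖ = g t := by
      rw [harad ξ hξ, norm_smul, Real.norm_eq_abs, abs_of_pos (ha₀pos t ht),
        hgval t ht]
      ring
    have hinner : ⟪a ξ, ξ⟫ = g t * t := by
      rw [harad ξ hξ, real_inner_smul_left, real_inner_self_eq_norm_sq, hgval t ht]
      ring
    have htp1 : 0 ≤ t ^ (p - 1) := Real.rpow_nonneg ht.le _
    have htpp : 0 ≤ t ^ p := Real.rpow_nonneg ht.le _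
    have hub := hUB t ht.le
    have htp : t ^ p = t ^ (p - 1) * t := by
      rw [← Real.rpow_add_one ht.ne' (p - 1)]
      congr 1
      ring
    have hT : t ≤ 1 + t ^ p := by
      rcases le_or_gt t 1 with h1 | h1
      · linarith
      · have := Real.rpow_le_rpow_of_exponent_le h1.le hp.le
        rw [Real.rpow_one] at this
        linarith
    refine ⟨?_, ?_, ?_⟩
    · rw [hnorm]
      nlinarith [mul_le_mul_of_nonneg_right h2K htp1, hKpos]
    · rw [hinner]
      calc c * t ^ p ≤ C₃ / (p - 1) * t ^ p := mul_le_mul_of_nonneg_right hcC htpp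
        _ = (C₃ / (p - 1) * t ^ (p - 1)) * t := by rw [htp]; ring
        _ ≤ g t * t := mul_le_mul_of_nonneg_right (hL t ht) ht.le
    · rw [hinner]
      nlinarith [mul_le_mul_of_nonneg_right hub ht.le,
        mul_le_mul_of_nonneg_left hT hKpos.le,
        mul_le_mul_of_nonneg_right h2K (by positivity : (0:ℝ) ≤ 1 + t ^ p), htp]
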